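/- Let G be a finite connected simple graph that contains an odd cycle, and let d : ℤ^E → ℤ^V send each edge to the sum of its endpoints. Then the kernel of d is a free abelian group of rank |E| - v, where v is the number of vertices. -/

import Mathlib

/-- The sum of the endpoints of an (unordered) edge, as an element of `ℤ^V`. -/
def endpointSum {V : Type*} [DecidableEq V] (e : Sym2 V) : V → ℤ :=
  Sym2.lift ⟨fun a b => Pi.single a (1 : ℤ) + Pi.single b 1, fun a b => add_comm _ _⟩ e

/-- The unsigned incidence map `d : ℤ^E → ℤ^V`, sending each edge to the sum of its
endpoints. -/
noncomputable def incMap {V : Type*} [Fintype V] [DecidableEq V] (G : SimpleGraph V)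
    [DecidableRel G.Adj] : (G.edgeSet → ℤ) →ₗ[ℤ] (V → ℤ) :=
  ∑ e : G.edgeSet,
    (LinearMap.proj (R := ℤ) (φ := fun _ : G.edgeSet => ℤ) e).smulRight
      (endpointSum (e : Sym2 V))

section Aux

variable {V : Type*} [Fintype V] [DecidableEq V] (G : SimpleGraph V) [DecidableRel G.Adj]

lemma incMap_apply (x : G.edgeSet → ℤ) :
    incMap G x = ∑ e : G.edgeSet, x e • endpointSum (e : Sym2 V) := by
  simp [incMap]

lemma incMap_single (e : G.edgeSet) :
    incMap G (Pi.single e 1) = endpointSum (e : Sym2 V) := by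
  rw [incMap_apply, Finset.sum_eq_single e]
  · simp
  · intro b _ hb; simp [Pi.single_apply, hb]
  · simp

omit [Fintype V] in
lemma endpointSum_mk (a b : V) :
    endpointSum (s(a, b)) = Pi.single a (1 : ℤ) + Pi.single b 1 := rfl

lemma walk_chain {a b : V} (w : G.Walk a b) :
    ∃ x, incMap G x = Pi.single a 1 - ((-1 : ℤ) ^ w.length) • Pi.single b 1 := by
  induction w with
  | nil => exact ⟨0, by simp⟩
  | @cons a c b h p ih =>
    obtain ⟨x, hx⟩ := ih
    refine ⟨Pi.single (⟨s(a, c), h⟩ : G.edgeSet) 1 - x, ?_⟩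
    rw [map_sub, incMap_single, hx, endpointSum_mk, SimpleGraph.Walk.length_cons, pow_succ]
    module

lemma two_single_mem (hconn : G.Connected)
    (hodd : ∃ (u : V) (w : G.Walk u u), w.IsCycle ∧ Odd w.length) (t : V) :
    (2 : ℤ) • Pi.single t 1 ∈ LinearMap.range (incMap G) := by
  obtain ⟨u, w, -, hlen⟩ := hodd
  obtain ⟨x, hx⟩ := walk_chain G w
  rw [hlen.neg_one_pow] at hx
  obtain ⟨p⟩ := hconn.preconnected t u
  obtain ⟨y, hy⟩ := walk_chain G p
  refine ⟨(2 : ℤ) • y + ((-1 : ℤ) ^ p.length) • x, ?_⟩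
  rw [map_add, map_smul, map_smul, hx, hy]
  have : ((-1 : ℤ) ^ p.length) * ((-1 : ℤ) ^ p.length) = 1 := by
    rw [← pow_add, ← two_mul, pow_mul]; norm_num
  match_scalars <;> simp [Pi.single_apply] <;> ring_nf <;> simp_all [mul_comm]

lemma finrank_range_eq (hconn : G.Connected)
    (hodd : ∃ (u : V) (w : G.Walk u u), w.IsCycle ∧ Odd w.length) :
    Module.finrank ℤ ↥(LinearMap.range (incMap G)) = Fintype.card V := by
  refine le_antisymm ?_ ?_
  · calc Module.finrank ℤ ↥(LinearMap.range (incMap G))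
        ≤ Module.finrank ℤ (V → ℤ) := Submodule.finrank_le _
      _ = Fintype.card V := by simp
  · have hli : LinearIndependent ℤ (fun t : V => (2 : ℤ) • Pi.single t (1 : ℤ)) := by
      have := (Pi.basisFun ℤ V).linearIndependent
      have hinj : Function.Injective (LinearMap.lsmul ℤ (V → ℤ) 2) :=
        smul_right_injective _ two_ne_zero
      have h2 := this.map' (LinearMap.lsmul ℤ (V → ℤ) 2) (LinearMap.ker_eq_bot.mpr hinj)
      convert h2 using 1
      ext t v
      simp [Pi.basisFun_apply]
      all_goals rfl
    let g : V → ↥(LinearMap.range (incMap G)) := fun t =>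
      ⟨(2 : ℤ) • Pi.single t 1, two_single_mem G hconn hodd t⟩
    have hg : LinearIndependent ℤ g := by
      apply LinearIndependent.of_comp (LinearMap.range (incMap G)).subtype
      convert hli
      rfl
    simpa using hg.fintype_card_le_finrank

end Aux

/-- For a finite connected simple graph containing an odd cycle, the kernel of the unsigned
incidence map `d : ℤ^E → ℤ^V` is a free abelian group of rank `|E| - v`. -/
theorem stmt4 {V : Type*} [Fintype V] [DecidableEq V] (G : SimpleGraph V)
    [DecidableRel G.Adj] (hconn : G.Connected)
    (hodd : ∃ (u : V) (w : G.Walk u u), w.IsCycle ∧ Odd w.length) :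
    Module.Free ℤ ↥(LinearMap.ker (incMap G)) ∧
    (Module.finrank ℤ ↥(LinearMap.ker (incMap G)) : ℤ) =
      (G.edgeFinset.card : ℤ) - Fintype.card V := by
  refine ⟨inferInstance, ?_⟩
  have hrn := LinearMap.rank_range_add_rank_ker (incMap G)
  rw [← Module.finrank_eq_rank, ← Module.finrank_eq_rank, ← Module.finrank_eq_rank] at hrn
  norm_cast at hrn
  have hE : Module.finrank ℤ (G.edgeSet → ℤ) = G.edgeFinset.card := by
    simp [SimpleGraph.edgeFinset, Set.toFinset_card]
  rw [hE, finrank_range_eq G hconn hodd] at hrn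
  omega
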